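/- Assuming the axiom of choice, every infinite set admits a globally homogeneous linear order. -/

import Mathlib

/-- A linear order is globally homogeneous if every open interval of the form `(-∞,a)`,
`(a,b)` with `a < b`, or `(a,∞)` is order-isomorphic to the whole order. -/
def GloballyHomogeneousOrder (S : Type*) [LinearOrder S] : Prop :=
  ∀ a b : S,
    Nonempty (Set.Iio a ≃o S) ∧ Nonempty (Set.Ioi a ≃o S) ∧
    (a < b → Nonempty (Set.Ioo a b ≃o S))

open Set


namespace GH

variable {K : Type*} [Field K] [LinearOrder K] [IsStrictOrderedRing K]

/-- `(a,∞) ≃o (0,∞)` via translation. -/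
def isoIoi (a : K) : Set.Ioi a ≃o Set.Ioi (0 : K) where
  toEquiv :=
  { toFun := fun x => ⟨x.1 - a, sub_pos.2 x.2⟩
    invFun := fun y => ⟨y.1 + a, by have := y.2; simp only [Set.mem_Ioi] at this ⊢; linarith⟩
    left_inv := fun x => Subtype.ext (by ring)
    right_inv := fun y => Subtype.ext (by ring) }
  map_rel_iff' := by intro x y; change x.1 - a ≤ y.1 - a ↔ x.1 ≤ y.1; simp [Subtype.coe_le_coe, sub_le_sub_iff_right]

/-- `(-∞,a) ≃o (0,∞)` via `x ↦ (a-x)⁻¹`. -/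
def isoIio (a : K) : Set.Iio a ≃o Set.Ioi (0 : K) where
  toEquiv :=
  { toFun := fun x => ⟨(a - x.1)⁻¹, inv_pos.2 (sub_pos.2 x.2)⟩
    invFun := fun y => ⟨a - y.1⁻¹, by
      have := y.2; simp only [Set.mem_Ioi] at this
      simp only [Set.mem_Iio]
      have : 0 < y.1⁻¹ := inv_pos.2 this
      linarith⟩
    left_inv := fun x => Subtype.ext (by
      simp only []
      rw [inv_inv, sub_sub_cancel])
    right_inv := fun y => Subtype.ext (by
      simp only []
      rw [sub_sub_cancel, inv_inv]) }
  map_rel_iff' := by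
    intro x y
    have hx : (0:K) < a - x.1 := sub_pos.2 x.2
    have hy : (0:K) < a - y.1 := sub_pos.2 y.2
    simp only [Equiv.coe_fn_mk, Subtype.mk_le_mk]
    change (a - x.1)⁻¹ ≤ (a - y.1)⁻¹ ↔ x.1 ≤ y.1
    rw [inv_le_inv₀ hx hy]
    constructor <;> intro h <;> linarith

/-- `(a,b) ≃o (0,∞)` via `x ↦ (x-a)/(b-x)`. -/
def isoIoo (a b : K) (hab : a < b) : Set.Ioo a b ≃o Set.Ioi (0 : K) where
  toEquiv :=
  { toFun := fun x => ⟨(x.1 - a) / (b - x.1), div_pos (sub_pos.2 x.2.1) (sub_pos.2 x.2.2)⟩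
    invFun := fun y => ⟨(a + b * y.1) / (1 + y.1), by
      have hy : (0:K) < y.1 := y.2
      have h1 : (0:K) < 1 + y.1 := by linarith
      constructor
      · rw [lt_div_iff₀ h1]; nlinarith
      · rw [div_lt_iff₀ h1]; nlinarith⟩
    left_inv := fun x => Subtype.ext (by
      have hbx : b - x.1 ≠ 0 := ne_of_gt (sub_pos.2 x.2.2)
      have hba : b - a ≠ 0 := ne_of_gt (sub_pos.2 hab)
      field_simp
      have hba' : -a + b ≠ 0 := by rwa [neg_add_eq_sub]
      linear_combination (x.1 : K) * mul_inv_cancel₀ hba')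
    right_inv := fun y => Subtype.ext (by
      have hy : (0:K) < y.1 := y.2
      have h1 : (0:K) < 1 + y.1 := by linarith
      have hba : -a + b ≠ 0 := by intro h; exact absurd (by linarith : a = b) (ne_of_lt hab)
      field_simp
      linear_combination (y.1 : K) * mul_inv_cancel₀ hba) }
  map_rel_iff' := by
    intro x y
    have hx : (0:K) < b - x.1 := sub_pos.2 x.2.2
    have hy : (0:K) < b - y.1 := sub_pos.2 y.2.2
    simp only [Equiv.coe_fn_mk, Subtype.mk_le_mk]
    change (x.1 - a) / (b - x.1) ≤ (y.1 - a) / (b - y.1) ↔ x.1 ≤ y.1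
    rw [div_le_div_iff₀ hx hy]
    constructor <;> intro h <;> nlinarith

theorem field_homog : GloballyHomogeneousOrder K := by
  have base : Nonempty (Set.Ioi (0:K) ≃o K) :=
    ⟨((isoIoo (-1 : K) 1 (by norm_num)).symm.trans (orderIsoIooNegOneOne K).symm : _)⟩
  obtain ⟨e⟩ := base
  intro a b
  exact ⟨⟨(isoIio a).trans e⟩, ⟨(isoIoi a).trans e⟩, fun h => ⟨(isoIoo a b h).trans e⟩⟩

end GH



namespace GH2

variable (Γ : Type*) [AddCommGroup Γ] [LinearOrder Γ] [IsOrderedAddMonoid Γ]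

abbrev K := HahnSeries Γ ℚ

open HahnSeries

lemma lc_pos_add {x y : HahnSeries Γ ℚ} (hx : 0 < x.leadingCoeff)
    (hy : 0 < y.leadingCoeff) : 0 < (x + y).leadingCoeff := by
  have hx0 : x ≠ 0 := leadingCoeff_ne_zero.mp (ne_of_gt hx)
  have hy0 : y ≠ 0 := leadingCoeff_ne_zero.mp (ne_of_gt hy)
  rcases lt_trichotomy x.orderTop y.orderTop with h | h | h
  · rw [leadingCoeff_add_eq_left h]; exact hx
  · -- equal orderTop
    have hxo : (x.order : WithTop Γ) = x.orderTop := order_eq_orderTop_of_ne_zero hx0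
    have hyo : (y.order : WithTop Γ) = y.orderTop := order_eq_orderTop_of_ne_zero hy0
    have hord : y.order = x.order := by
      have : (y.order : WithTop Γ) = (x.order : WithTop Γ) := by rw [hxo, hyo, h]
      exact_mod_cast this
    have hcx : x.coeff x.order = x.leadingCoeff := leadingCoeff_eq.symm
    have hcy : y.coeff x.order = y.leadingCoeff := by rw [← hord]; exact leadingCoeff_eq.symm
    have hco : (x + y).coeff x.order = x.leadingCoeff + y.leadingCoeff := by
      rw [coeff_add, hcx, hcy]
    have hpos : 0 < (x + y).coeff x.order := by rw [hco]; positivity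
    have hne : (x + y).coeff x.order ≠ 0 := ne_of_gt hpos
    have hxy0 : x + y ≠ 0 := ne_zero_of_coeff_ne_zero hne
    have h1 : (x + y).orderTop ≤ (x.order : WithTop Γ) := orderTop_le_of_coeff_ne_zero hne
    have h2 : (x.order : WithTop Γ) ≤ (x + y).orderTop := by
      calc (x.order : WithTop Γ) = min x.orderTop y.orderTop := by
            rw [hxo, h, min_self]
        _ ≤ (x + y).orderTop := min_orderTop_le_orderTop_add
    have h3 : ((x + y).order : WithTop Γ) = (x.order : WithTop Γ) := by
      rw [order_eq_orderTop_of_ne_zero hxy0]; exact le_antisymm h1 h2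
    have h4 : (x + y).order = x.order := by exact_mod_cast h3
    rw [leadingCoeff_eq, h4, hco]
    positivity
  · rw [leadingCoeff_add_eq_right h]; exact hy

lemma lc_mul {x y : HahnSeries Γ ℚ} (hx0 : x ≠ 0) (hy0 : y ≠ 0) :
    (x * y).leadingCoeff = x.leadingCoeff * y.leadingCoeff := by
  have h := coeff_mul_order_add_order x y
  rw [leadingCoeff_eq, order_mul_of_ne_zero
    (mul_ne_zero (leadingCoeff_ne_zero.mpr hx0) (leadingCoeff_ne_zero.mpr hy0)), h, leadingCoeff_eq, leadingCoeff_eq]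

/-- The positive cone of Hahn series with nonnegative leading coefficient. -/
def cone : RingCone (HahnSeries Γ ℚ) where
  carrier := {x | 0 ≤ x.leadingCoeff}
  zero_mem' := by simp [leadingCoeff_zero]
  one_mem' := by simp [leadingCoeff_one]
  add_mem' := by
    intro x y hx hy
    rcases eq_or_ne x 0 with rfl | hx0
    · simpa using hy
    rcases eq_or_ne y 0 with rfl | hy0
    · simpa using hx
    have hx' : 0 < x.leadingCoeff := lt_of_le_of_ne hx (Ne.symm (leadingCoeff_ne_zero.mpr hx0))
    have hy' : 0 < y.leadingCoeff := lt_of_le_of_ne hy (Ne.symm (leadingCoeff_ne_zero.mpr hy0))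
    exact le_of_lt (lc_pos_add Γ hx' hy')
  mul_mem' := by
    intro x y hx hy
    rcases eq_or_ne x 0 with rfl | hx0
    · simp [leadingCoeff_zero]
    rcases eq_or_ne y 0 with rfl | hy0
    · simp [leadingCoeff_zero]
    show 0 ≤ (x * y).leadingCoeff
    rw [lc_mul Γ hx0 hy0]
    exact mul_nonneg hx hy
  eq_zero_of_mem_of_neg_mem' := by
    intro a ha hna
    have h1 : 0 ≤ a.leadingCoeff := ha
    have h2 : 0 ≤ (-a).leadingCoeff := hna
    rw [show (-a).leadingCoeff = -a.leadingCoeff from ?_] at h2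
    · exact leadingCoeff_eq_zero.mp (le_antisymm (by linarith) h1)
    · rcases eq_or_ne a 0 with rfl | h
      · simp
      · rw [leadingCoeff_eq, leadingCoeff_eq, order_neg, coeff_neg]

instance : HasMemOrNegMem (cone Γ) :=
  ⟨fun a => by
    rcases le_total 0 a.leadingCoeff with h | h
    · exact Or.inl h
    · right
      show (0:ℚ) ≤ (-a).leadingCoeff
      rcases eq_or_ne a 0 with rfl | h0
      · simp [leadingCoeff_zero]
      · rw [show (-a).leadingCoeff = -a.leadingCoeff by
          rw [leadingCoeff_eq, leadingCoeff_eq, order_neg, coeff_neg]]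
        linarith⟩

noncomputable def hahnLOF : LinearOrder (HahnSeries Γ ℚ) :=
  letI := Classical.decPred (· ∈ cone Γ)
  LinearOrder.mkOfAddGroupCone (cone Γ)

theorem hahnSOR : letI := hahnLOF Γ; IsStrictOrderedRing (HahnSeries Γ ℚ) := by
  letI := hahnLOF Γ
  haveI : IsOrderedRing (HahnSeries Γ ℚ) := IsOrderedRing.mkOfCone (cone Γ)
  exact IsOrderedRing.toIsStrictOrderedRing _

end GH2

namespace GH3

def restrictIso {α β : Type*} [Preorder α] [Preorder β] (φ : α ≃o β) (s : Set α) (t : Set β)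
    (h : ∀ x, x ∈ s ↔ φ x ∈ t) : s ≃o t where
  toEquiv :=
  { toFun := fun x => ⟨φ x, (h x).1 x.2⟩
    invFun := fun y => ⟨φ.symm y, (h _).2 (by simpa using y.2)⟩
    left_inv := fun x => Subtype.ext (φ.symm_apply_apply x)
    right_inv := fun y => Subtype.ext (φ.apply_symm_apply y) }
  map_rel_iff' := φ.le_iff_le

theorem transfer {α β : Type*} [LinearOrder α] [LinearOrder β] (φ : α ≃o β)
    (hβ : GloballyHomogeneousOrder β) : GloballyHomogeneousOrder α := by
  intro a b
  obtain ⟨⟨e1⟩, ⟨e2⟩, h3⟩ := hβ (φ a) (φ b)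
  refine ⟨⟨?_⟩, ⟨?_⟩, fun hab => ?_⟩
  · exact (restrictIso φ _ _ (fun x => by simp [Set.mem_Iio, φ.lt_iff_lt])).trans
      (e1.trans φ.symm)
  · exact (restrictIso φ _ _ (fun x => by simp [Set.mem_Ioi, φ.lt_iff_lt])).trans
      (e2.trans φ.symm)
  · obtain ⟨e3⟩ := h3 (φ.lt_iff_lt.mpr hab)
    exact ⟨(restrictIso φ _ _ (fun x => by simp [Set.mem_Ioo, φ.lt_iff_lt])).trans
      (e3.trans φ.symm)⟩

end GH3

theorem stmt_15 (S : Type*) [Infinite S] :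
    ∃ li : LinearOrder S, @GloballyHomogeneousOrder S li := by
  classical
  let W := (Cardinal.mk S).ord.ToType
  let Γ := Lex (W →₀ ℚ)
  let K := HahnSeries Γ ℚ
  letI : LinearOrder K := GH2.hahnLOF Γ
  haveI : IsStrictOrderedRing K := GH2.hahnSOR Γ
  let γ : W → Γ := fun w => toLex (Finsupp.single w (1:ℚ))
  have hγ : Function.Injective γ := fun u v h =>
    Finsupp.single_left_injective one_ne_zero (toLex.injective h)
  let f : W → K := fun w => HahnSeries.single (γ w) (1:ℚ)
  have hf : Function.Injective f := by
    intro u v h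
    by_contra huv
    have h1 : (f u).coeff (γ u) = 1 := HahnSeries.coeff_single_same _ _
    have h2 : (f v).coeff (γ u) = 0 :=
      HahnSeries.coeff_single_of_ne (fun hc => huv (hγ hc.symm).symm)
    rw [h, h2] at h1
    exact one_ne_zero h1.symm
  have hWcard : Cardinal.mk W = Cardinal.mk S := by
    rw [Cardinal.mk_toType, Cardinal.card_ord]
  let s : Set K := Set.range f
  have hs : Cardinal.mk s = Cardinal.mk S := by
    rw [Cardinal.mk_range_eq f hf, hWcard]
  haveI : Infinite s := by
    rw [Cardinal.infinite_iff, hs]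
    exact Cardinal.infinite_iff.mp ‹Infinite S›
  have hF : Cardinal.mk (Subfield.closure s) = Cardinal.mk S := by
    rw [Subfield.cardinalMk_closure, hs]
  obtain ⟨e⟩ : Nonempty (S ≃ Subfield.closure s) := Cardinal.eq.mp hF.symm
  letI li : LinearOrder S := LinearOrder.lift' (fun x => e x) e.injective
  have φ : S ≃o Subfield.closure s := { e with map_rel_iff' := Iff.rfl }
  exact ⟨li, GH3.transfer φ (GH.field_homog)⟩
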